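/- Let E be a real inner product space, w ∈ E with w ≠ 0, α > 0, z ∈ E. If x ∈ E maximizes the utility u(y) = (1 if ⟪y, w⟫ ≥ α·‖w‖ else 0) − ‖y − z‖/α over all y ∈ E, then it is not the case that 0 < ⟪x, w⟫ < α·‖w‖. -/

import Mathlib

open RealInnerProductSpace

theorem strategic_best_response_forbidden_region
    {E : Type*} [NormedAddCommGroup E] [InnerProductSpace ℝ E]
    (w : E) (hw : w ≠ 0) (α : ℝ) (hα : 0 < α) (z x : E)
    (hmax : ∀ y : E,
      ((if ⟪y, w⟫ ≥ α * ‖w‖ then (1 : ℝ) else 0) - ‖y - z‖ / α) ≤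
        ((if ⟪x, w⟫ ≥ α * ‖w‖ then (1 : ℝ) else 0) - ‖x - z‖ / α)) :
    ¬ (0 < ⟪x, w⟫ ∧ ⟪x, w⟫ < α * ‖w‖) := by
  rintro ⟨hc0, hclt⟩
  have hwpos : (0:ℝ) < ‖w‖ := norm_pos_iff.mpr hw
  have hnotge : ¬ (⟪x, w⟫ ≥ α * ‖w‖) := not_le.mpr hclt
  -- utility of x is -‖x-z‖/α
  have hux : ((if ⟪x, w⟫ ≥ α * ‖w‖ then (1:ℝ) else 0) - ‖x - z‖ / α) = - (‖x - z‖ / α) := by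
    rw [if_neg hnotge]; ring
  -- compare with y = z to get x = z
  have hz := hmax z
  rw [hux] at hz
  have hz' : (0:ℝ) ≤ (if ⟪z, w⟫ ≥ α * ‖w‖ then (1:ℝ) else 0) - ‖z - z‖ / α := by
    simp only [sub_self, norm_zero, zero_div, sub_zero]
    positivity
  have hxz : ‖x - z‖ = 0 := by
    have h1 : (0:ℝ) ≤ - (‖x - z‖ / α) := le_trans hz' hz
    have h2 : (0:ℝ) ≤ ‖x - z‖ / α := by positivity
    have : ‖x - z‖ / α = 0 := le_antisymm (by linarith) h2
    field_simp at this
    rw [this, mul_zero]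
  -- now consider y = x + t • w on the hyperplane
  set t : ℝ := (α * ‖w‖ - ⟪x, w⟫) / ‖w‖^2 with ht
  have htpos : 0 < t := by
    apply div_pos (by linarith) (by positivity)
  have hy := hmax (x + t • w)
  have hinner : ⟪x + t • w, w⟫ = α * ‖w‖ := by
    rw [inner_add_left, real_inner_smul_left, real_inner_self_eq_norm_sq, ht]
    field_simp
    ring
  have hnorm : ‖x + t • w - z‖ = t * ‖w‖ := by
    have hx : x = z := by rwa [← sub_eq_zero, ← norm_eq_zero]
    rw [hx, add_sub_cancel_left, norm_smul, Real.norm_eq_abs, abs_of_pos htpos]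
  rw [if_pos (ge_of_eq hinner), hux, hxz, hnorm] at hy
  -- hy : 1 - t * ‖w‖ / α ≤ - (0 / α)
  have hy' : 1 - t * ‖w‖ / α ≤ 0 := by simpa using hy
  have ht' : t * ‖w‖ = (α * ‖w‖ - ⟪x, w⟫) / ‖w‖ := by
    rw [ht]; field_simp
  have hlt : t * ‖w‖ < α := by
    rw [ht']
    rw [div_lt_iff₀ hwpos]
    nlinarith
  have : t * ‖w‖ / α < 1 := (div_lt_one hα).mpr hlt
  linarith
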